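/- Let 0 ≤ c < 1 and 0 < T < ∞. Suppose α and β are non-negative measurable functions on (0,T] such that α(t) ≤ (1/t) ∫₀ᵗ (t-s)^{-c} β(s) ds for all 0 < t ≤ T. Then for any real number b < 2c + 1 there is a constant γ, depending only on b and c, such that ∫₀ᵀ t^b α(t)² dt ≤ γ ∫₀ᵀ s^{b-2c} β(s)² ds, the integrals being interpreted in [0,∞]. -/

import Mathlib

open MeasureTheory Set
open scoped ENNReal

private lemma conv_lint_rpow_Ioc {d : ℝ} (hd : -1 < d) {r : ℝ} (hr : 0 < r) :
    ∫⁻ s in Ioc (0:ℝ) r, ENNReal.ofReal (s ^ d) = ENNReal.ofReal (r ^ (d+1) / (d+1)) := by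
  rw [← ofReal_integral_eq_lintegral_ofReal (intervalIntegral.intervalIntegrable_rpow' hd).1
    (ae_restrict_of_forall_mem measurableSet_Ioc fun x hx => Real.rpow_nonneg hx.1.le _)]
  rw [← intervalIntegral.integral_of_le hr.le, integral_rpow (Or.inl hd),
    Real.zero_rpow (by linarith), sub_zero]

private lemma conv_lint_shift {c : ℝ} (hc1 : c < 1) {s u : ℝ} (hsu : s < u) :
    ∫⁻ t in Ioc s u, ENNReal.ofReal ((t - s) ^ (-c))
      = ENNReal.ofReal ((u - s) ^ (1-c) / (1-c)) := by
  have hi : IntervalIntegrable (fun t : ℝ => (t - s) ^ (-c)) volume s u := by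
    have := (intervalIntegral.intervalIntegrable_rpow' (a := 0) (b := u - s) (r := -c)
      (by linarith)).comp_sub_right s
    simpa using this
  rw [← ofReal_integral_eq_lintegral_ofReal hi.1
    (ae_restrict_of_forall_mem measurableSet_Ioc fun x hx =>
      Real.rpow_nonneg (by linarith [hx.1]) _)]
  rw [← intervalIntegral.integral_of_le hsu.le,
    intervalIntegral.integral_comp_sub_right (fun x => x ^ (-c)) s, sub_self,
    integral_rpow (Or.inl (by linarith)), Real.zero_rpow (by linarith), sub_zero]
  rw [show -c+1 = 1-c by ring]

private lemma conv_lint_reflect {c : ℝ} (hc1 : c < 1) {a t : ℝ} (h : a < t) :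
    ∫⁻ x in Ioc a t, ENNReal.ofReal ((t - x) ^ (-c))
      = ENNReal.ofReal ((t - a) ^ (1-c) / (1-c)) := by
  have hi : IntervalIntegrable (fun x : ℝ => (t - x) ^ (-c)) volume a t := by
    have := ((intervalIntegral.intervalIntegrable_rpow' (a := 0) (b := t - a) (r := -c)
      (by linarith)).comp_sub_left t).symm
    simpa using this
  rw [← ofReal_integral_eq_lintegral_ofReal hi.1
    (ae_restrict_of_forall_mem measurableSet_Ioc fun x hx =>
      Real.rpow_nonneg (by linarith [hx.2]) _)]
  rw [← intervalIntegral.integral_of_le h.le,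
    intervalIntegral.integral_comp_sub_left (fun x => x ^ (-c)) t, sub_self,
    integral_rpow (Or.inl (by linarith)), Real.zero_rpow (by linarith), sub_zero]
  rw [show -c+1 = 1-c by ring]

private lemma conv_half_rpow {t : ℝ} (ht : 0 < t) (x : ℝ) :
    (t/2) ^ x = (2:ℝ) ^ (-x) * t ^ x := by
  rw [div_eq_mul_inv, mul_comm, Real.mul_rpow (by norm_num) ht.le,
    Real.inv_rpow (by norm_num), ← Real.rpow_neg (by norm_num)]

private lemma conv_pow_bound_upper {x t d : ℝ} (hx : 0 < x) (h1 : t/2 ≤ x) (h2 : x ≤ t) :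
    x ^ d ≤ max 1 ((2:ℝ) ^ (-d)) * t ^ d := by
  have ht : 0 < t := lt_of_lt_of_le hx h2
  rcases le_or_gt 0 d with hd | hd
  · exact le_trans (Real.rpow_le_rpow hx.le h2 hd)
      (le_mul_of_one_le_left (Real.rpow_nonneg ht.le _) (le_max_left _ _))
  · calc x ^ d ≤ (t/2) ^ d :=
        Real.rpow_le_rpow_of_nonpos (by linarith) h1 hd.le
    _ = (2:ℝ) ^ (-d) * t ^ d := conv_half_rpow ht d
    _ ≤ max 1 ((2:ℝ) ^ (-d)) * t ^ d :=
        mul_le_mul_of_nonneg_right (le_max_right _ _) (Real.rpow_nonneg ht.le _)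

private lemma conv_pow_bound_lower {x s e : ℝ} (hs : 0 < s) (h1 : s ≤ x) (h2 : x ≤ 2*s) :
    x ^ e ≤ max 1 ((2:ℝ) ^ e) * s ^ e := by
  rcases le_or_gt 0 e with he | he
  · calc x ^ e ≤ (2*s) ^ e := Real.rpow_le_rpow (by linarith) h2 he
    _ = (2:ℝ) ^ e * s ^ e := Real.mul_rpow (by norm_num) hs.le
    _ ≤ max 1 ((2:ℝ) ^ e) * s ^ e :=
        mul_le_mul_of_nonneg_right (le_max_right _ _) (Real.rpow_nonneg hs.le _)
  · exact le_trans (Real.rpow_le_rpow_of_nonpos hs h1 he.le)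
      (le_mul_of_one_le_left (Real.rpow_nonneg hs.le _) (le_max_left _ _))

private lemma conv_L1 {c d : ℝ} (hc0 : 0 ≤ c) (hc1 : c < 1) (hd : -1 < d) {t : ℝ} (ht : 0 < t) :
    ∫⁻ s in Ioo (0:ℝ) t, ENNReal.ofReal ((t - s) ^ (-c) * s ^ d)
      ≤ ENNReal.ofReal ((2:ℝ)^(c-d-1)/(d+1) + max 1 ((2:ℝ)^(-d)) * (2:ℝ)^(c-1)/(1-c))
        * ENNReal.ofReal (t ^ (1-c+d)) := by
  have ht2 : 0 < t/2 := half_pos ht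
  have h2pos : (0:ℝ) < 2 := two_pos
  have hKd : (0:ℝ) ≤ max 1 ((2:ℝ)^(-d)) := le_trans zero_le_one (le_max_left _ _)
  have piece1 : ∫⁻ s in Ioc (0:ℝ) (t/2), ENNReal.ofReal ((t - s) ^ (-c) * s ^ d)
      ≤ ENNReal.ofReal ((2:ℝ)^(c-d-1)/(d+1) * t ^ (1-c+d)) := by
    calc ∫⁻ s in Ioc (0:ℝ) (t/2), ENNReal.ofReal ((t - s) ^ (-c) * s ^ d)
        ≤ ∫⁻ s in Ioc (0:ℝ) (t/2), ENNReal.ofReal ((t/2) ^ (-c)) * ENNReal.ofReal (s ^ d) := by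
          refine lintegral_mono_ae ?_
          filter_upwards [ae_restrict_mem measurableSet_Ioc] with s hs
          rw [← ENNReal.ofReal_mul (Real.rpow_nonneg ht2.le _)]
          refine ENNReal.ofReal_le_ofReal (mul_le_mul_of_nonneg_right
            (Real.rpow_le_rpow_of_nonpos ht2 (by linarith [hs.2]) (neg_nonpos.mpr hc0))
            (Real.rpow_nonneg hs.1.le _))
      _ = ENNReal.ofReal ((t/2) ^ (-c)) * ENNReal.ofReal ((t/2) ^ (d+1) / (d+1)) := by
          rw [lintegral_const_mul' _ _ ENNReal.ofReal_ne_top, conv_lint_rpow_Ioc hd ht2]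
      _ = ENNReal.ofReal ((2:ℝ)^(c-d-1)/(d+1) * t ^ (1-c+d)) := by
          rw [← ENNReal.ofReal_mul (Real.rpow_nonneg ht2.le _)]
          congr 1
          have e1 : (2:ℝ)^c * (2:ℝ)^(-(d+1)) = (2:ℝ)^(c-d-1) := by
            rw [← Real.rpow_add h2pos]; ring_nf
          have e2 : t^(-c) * t^(d+1) = t^(1-c+d) := by
            rw [← Real.rpow_add ht]; ring_nf
          rw [conv_half_rpow ht, conv_half_rpow ht, neg_neg, ← e1, ← e2]
          ring
  have piece2 : ∫⁻ s in Ioc (t/2) t, ENNReal.ofReal ((t - s) ^ (-c) * s ^ d)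
      ≤ ENNReal.ofReal (max 1 ((2:ℝ)^(-d)) * (2:ℝ)^(c-1)/(1-c) * t ^ (1-c+d)) := by
    calc ∫⁻ s in Ioc (t/2) t, ENNReal.ofReal ((t - s) ^ (-c) * s ^ d)
        ≤ ∫⁻ s in Ioc (t/2) t, ENNReal.ofReal (max 1 ((2:ℝ)^(-d)) * t ^ d)
            * ENNReal.ofReal ((t - s) ^ (-c)) := by
          refine lintegral_mono_ae ?_
          filter_upwards [ae_restrict_mem measurableSet_Ioc] with s hs
          rw [← ENNReal.ofReal_mul (by positivity)]
          refine ENNReal.ofReal_le_ofReal ?_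
          rw [mul_comm ((t-s) ^ (-c))]
          exact mul_le_mul_of_nonneg_right
            (conv_pow_bound_upper (lt_trans ht2 hs.1) hs.1.le hs.2)
            (Real.rpow_nonneg (by linarith [hs.2]) _)
      _ = ENNReal.ofReal (max 1 ((2:ℝ)^(-d)) * t ^ d)
            * ENNReal.ofReal ((t - t/2) ^ (1-c) / (1-c)) := by
          rw [lintegral_const_mul' _ _ ENNReal.ofReal_ne_top,
            conv_lint_reflect hc1 (by linarith)]
      _ = ENNReal.ofReal (max 1 ((2:ℝ)^(-d)) * (2:ℝ)^(c-1)/(1-c) * t ^ (1-c+d)) := by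
          rw [← ENNReal.ofReal_mul (by positivity)]
          congr 1
          have e1 : (2:ℝ)^(-(1-c)) = (2:ℝ)^(c-1) := by rw [show -(1-c) = c-1 by ring]
          have e2 : t^d * t^(1-c) = t^(1-c+d) := by
            rw [← Real.rpow_add ht]; ring_nf
          rw [show t - t/2 = t/2 by ring, conv_half_rpow ht, e1, ← e2]
          ring
  calc ∫⁻ s in Ioo (0:ℝ) t, ENNReal.ofReal ((t - s) ^ (-c) * s ^ d)
      ≤ ∫⁻ s in Ioc (0:ℝ) t, ENNReal.ofReal ((t - s) ^ (-c) * s ^ d) :=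
        lintegral_mono_set Ioo_subset_Ioc_self
    _ = (∫⁻ s in Ioc (0:ℝ) (t/2), ENNReal.ofReal ((t - s) ^ (-c) * s ^ d))
        + ∫⁻ s in Ioc (t/2) t, ENNReal.ofReal ((t - s) ^ (-c) * s ^ d) := by
        rw [← Set.Ioc_union_Ioc_eq_Ioc ht2.le (by linarith : t/2 ≤ t),
          lintegral_union measurableSet_Ioc (Set.Ioc_disjoint_Ioc_of_le le_rfl)]
    _ ≤ ENNReal.ofReal ((2:ℝ)^(c-d-1)/(d+1) * t ^ (1-c+d))
        + ENNReal.ofReal (max 1 ((2:ℝ)^(-d)) * (2:ℝ)^(c-1)/(1-c) * t ^ (1-c+d)) :=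
        add_le_add piece1 piece2
    _ = ENNReal.ofReal ((2:ℝ)^(c-d-1)/(d+1) + max 1 ((2:ℝ)^(-d)) * (2:ℝ)^(c-1)/(1-c))
        * ENNReal.ofReal (t ^ (1-c+d)) := by
        have ha1 : (0:ℝ) ≤ (2:ℝ)^(c-d-1)/(d+1) :=
          div_nonneg (Real.rpow_nonneg (by norm_num) _) (by linarith)
        have ha2 : (0:ℝ) ≤ max 1 ((2:ℝ)^(-d)) * (2:ℝ)^(c-1)/(1-c) :=
          div_nonneg (mul_nonneg hKd (Real.rpow_nonneg (by norm_num) _)) (by linarith)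
        rw [← ENNReal.ofReal_mul (ha1.trans (le_add_of_nonneg_right ha2) : (0:ℝ) ≤ _)]
        rw [← ENNReal.ofReal_add (by positivity) (by positivity)]
        congr 1
        ring

private lemma conv_L2 {c e : ℝ} (hc0 : 0 ≤ c) (hc1 : c < 1) (he : e - c < -1)
    {s T : ℝ} (hs : 0 < s) :
    ∫⁻ t in Ioc s T, ENNReal.ofReal (t ^ e * (t - s) ^ (-c))
      ≤ ENNReal.ofReal (max 1 ((2:ℝ)^e)/(1-c) + (2:ℝ)^c * (2:ℝ)^(e-c+1)/(-(e-c+1)))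
        * ENNReal.ofReal (s ^ (e-c+1)) := by
  have h2pos : (0:ℝ) < 2 := two_pos
  have hKe : (0:ℝ) ≤ max 1 ((2:ℝ)^e) := le_trans zero_le_one (le_max_left _ _)
  have hm : e - c + 1 < 0 := by linarith
  have piece1 : ∫⁻ t in Ioc s (2*s), ENNReal.ofReal (t ^ e * (t - s) ^ (-c))
      ≤ ENNReal.ofReal (max 1 ((2:ℝ)^e)/(1-c) * s ^ (e-c+1)) := by
    calc ∫⁻ t in Ioc s (2*s), ENNReal.ofReal (t ^ e * (t - s) ^ (-c))
        ≤ ∫⁻ t in Ioc s (2*s), ENNReal.ofReal (max 1 ((2:ℝ)^e) * s ^ e)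
            * ENNReal.ofReal ((t - s) ^ (-c)) := by
          refine lintegral_mono_ae ?_
          filter_upwards [ae_restrict_mem measurableSet_Ioc] with t htm
          rw [← ENNReal.ofReal_mul (by positivity)]
          exact ENNReal.ofReal_le_ofReal (mul_le_mul_of_nonneg_right
            (conv_pow_bound_lower hs htm.1.le htm.2)
            (Real.rpow_nonneg (by linarith [htm.1]) _))
      _ = ENNReal.ofReal (max 1 ((2:ℝ)^e) * s ^ e)
            * ENNReal.ofReal ((2*s - s) ^ (1-c) / (1-c)) := by
          rw [lintegral_const_mul' _ _ ENNReal.ofReal_ne_top,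
            conv_lint_shift hc1 (by linarith)]
      _ = ENNReal.ofReal (max 1 ((2:ℝ)^e)/(1-c) * s ^ (e-c+1)) := by
          rw [← ENNReal.ofReal_mul (by positivity)]
          congr 1
          have e2 : s^e * s^(1-c) = s^(e-c+1) := by
            rw [← Real.rpow_add hs]; ring_nf
          rw [show 2*s - s = s by ring, ← e2]
          ring
  have piece2 : ∫⁻ t in Ioi (2*s), ENNReal.ofReal (t ^ e * (t - s) ^ (-c))
      ≤ ENNReal.ofReal ((2:ℝ)^c * (2:ℝ)^(e-c+1)/(-(e-c+1)) * s ^ (e-c+1)) := by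
    calc ∫⁻ t in Ioi (2*s), ENNReal.ofReal (t ^ e * (t - s) ^ (-c))
        ≤ ∫⁻ t in Ioi (2*s), ENNReal.ofReal ((2:ℝ)^c)
            * ENNReal.ofReal (t ^ (e-c)) := by
          refine lintegral_mono_ae ?_
          filter_upwards [ae_restrict_mem measurableSet_Ioi] with t htm
          have ht0 : 0 < t := lt_trans (by linarith) htm
          have hts : t/2 ≤ t - s := by
            simp only [Set.mem_Ioi] at htm; linarith
          rw [← ENNReal.ofReal_mul (Real.rpow_nonneg h2pos.le _)]
          refine ENNReal.ofReal_le_ofReal ?_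
          have h1 : (t - s) ^ (-c) ≤ (t/2) ^ (-c) :=
            Real.rpow_le_rpow_of_nonpos (half_pos ht0) hts (neg_nonpos.mpr hc0)
          have h2 : (t/2) ^ (-c) = (2:ℝ)^c * t ^ (-c) := by
            rw [conv_half_rpow ht0, neg_neg]
          have h3 : t^e * t^(-c) = t^(e-c) := by
            rw [← Real.rpow_add ht0]; ring_nf
          calc t ^ e * (t - s) ^ (-c) ≤ t ^ e * (t/2) ^ (-c) :=
              mul_le_mul_of_nonneg_left h1 (Real.rpow_nonneg ht0.le _)
            _ = (2:ℝ)^c * t^(e-c) := by rw [h2, ← h3]; ring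
      _ = ENNReal.ofReal ((2:ℝ)^c) * ENNReal.ofReal (-(2*s) ^ (e-c+1) / (e-c+1)) := by
          rw [lintegral_const_mul' _ _ ENNReal.ofReal_ne_top,
            ← ofReal_integral_eq_lintegral_ofReal
              (integrableOn_Ioi_rpow_of_lt he (by linarith))
              (ae_restrict_of_forall_mem measurableSet_Ioi fun x hx =>
                Real.rpow_nonneg (by linarith [Set.mem_Ioi.mp hx]) _),
            integral_Ioi_rpow_of_lt he (by linarith)]
      _ = ENNReal.ofReal ((2:ℝ)^c * (2:ℝ)^(e-c+1)/(-(e-c+1)) * s ^ (e-c+1)) := by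
          rw [← ENNReal.ofReal_mul (Real.rpow_nonneg h2pos.le _)]
          congr 1
          rw [Real.mul_rpow h2pos.le hs.le, div_neg]
          ring
  calc ∫⁻ t in Ioc s T, ENNReal.ofReal (t ^ e * (t - s) ^ (-c))
      ≤ ∫⁻ t in Ioc s (2*s) ∪ Ioi (2*s), ENNReal.ofReal (t ^ e * (t - s) ^ (-c)) := by
        refine lintegral_mono_set ?_
        rw [Set.Ioc_union_Ioi_eq_Ioi (by linarith : s ≤ 2*s)]
        exact Set.Ioc_subset_Ioi_self
    _ = (∫⁻ t in Ioc s (2*s), ENNReal.ofReal (t ^ e * (t - s) ^ (-c)))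
        + ∫⁻ t in Ioi (2*s), ENNReal.ofReal (t ^ e * (t - s) ^ (-c)) :=
        lintegral_union measurableSet_Ioi (Set.Ioc_disjoint_Ioi le_rfl)
    _ ≤ ENNReal.ofReal (max 1 ((2:ℝ)^e)/(1-c) * s ^ (e-c+1))
        + ENNReal.ofReal ((2:ℝ)^c * (2:ℝ)^(e-c+1)/(-(e-c+1)) * s ^ (e-c+1)) :=
        add_le_add piece1 piece2
    _ = ENNReal.ofReal (max 1 ((2:ℝ)^e)/(1-c) + (2:ℝ)^c * (2:ℝ)^(e-c+1)/(-(e-c+1)))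
        * ENNReal.ofReal (s ^ (e-c+1)) := by
        have ha1 : (0:ℝ) ≤ max 1 ((2:ℝ)^e)/(1-c) := div_nonneg hKe (by linarith)
        have ha2 : (0:ℝ) ≤ (2:ℝ)^c * (2:ℝ)^(e-c+1)/(-(e-c+1)) :=
          div_nonneg (mul_nonneg (Real.rpow_nonneg h2pos.le _)
            (Real.rpow_nonneg h2pos.le _)) (by linarith)
        rw [← ENNReal.ofReal_mul (add_nonneg ha1 ha2),
          ← ENNReal.ofReal_add (mul_nonneg ha1 (Real.rpow_nonneg hs.le _))
            (mul_nonneg ha2 (Real.rpow_nonneg hs.le _))]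
        congr 1
        ring

private lemma conv_CS {c d : ℝ} {B : ℝ → ℝ} (hB : Measurable B) (hB0 : ∀ s, 0 ≤ B s)
    {t : ℝ} (ht : 0 < t) :
    (∫⁻ s in Ioo (0:ℝ) t, ENNReal.ofReal ((t - s) ^ (-c) * B s)) ^ 2
      ≤ (∫⁻ s in Ioo (0:ℝ) t, ENNReal.ofReal ((t - s) ^ (-c) * s ^ d)) *
        (∫⁻ s in Ioo (0:ℝ) t, ENNReal.ofReal ((t - s) ^ (-c) * s ^ (-d) * B s ^ 2)) := by
  set μ := volume.restrict (Ioo (0:ℝ) t) with hμ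
  set f : ℝ → ℝ≥0∞ := fun s => ENNReal.ofReal ((t - s) ^ (-c/2) * s ^ (d/2)) with hfdef
  set g : ℝ → ℝ≥0∞ := fun s => ENNReal.ofReal ((t - s) ^ (-c/2) * s ^ (-d/2) * B s)
    with hgdef
  have hmf : AEMeasurable f μ := (by fun_prop : Measurable f).aemeasurable
  have hmg : AEMeasurable g μ := (by fun_prop : Measurable g).aemeasurable
  have hpq : Real.HolderConjugate 2 2 := Real.holderConjugate_iff.mpr ⟨one_lt_two, by norm_num⟩
  have H := ENNReal.lintegral_mul_le_Lp_mul_Lq μ hpq hmf hmg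
  have e0 : ∫⁻ s in Ioo (0:ℝ) t, ENNReal.ofReal ((t - s) ^ (-c) * B s)
      = ∫⁻ a, (f * g) a ∂μ := by
    refine setLIntegral_congr_fun_ae measurableSet_Ioo (Filter.Eventually.of_forall ?_)
    intro s hs
    have hts : 0 < t - s := by linarith [hs.2]
    have hs0 : 0 < s := hs.1
    have a1 : (t-s)^(-c/2) * (t-s)^(-c/2) = (t-s)^(-c) := by
      rw [← Real.rpow_add hts]; ring_nf
    have a2 : s^(d/2) * s^(-d/2) = 1 := by
      rw [← Real.rpow_add hs0, show d/2 + -d/2 = 0 by ring, Real.rpow_zero]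
    show ENNReal.ofReal ((t - s) ^ (-c) * B s) = f s * g s
    rw [hfdef, hgdef]
    simp only
    rw [← ENNReal.ofReal_mul (by positivity)]
    congr 1
    linear_combination (-(B s)) * a1
      + (-((t - s) ^ (-c/2) * ((t - s) ^ (-c/2)) * B s)) * a2
  have e1 : ∫⁻ s in Ioo (0:ℝ) t, ENNReal.ofReal ((t - s) ^ (-c) * s ^ d)
      = ∫⁻ a, f a ^ (2:ℝ) ∂μ := by
    refine setLIntegral_congr_fun_ae measurableSet_Ioo (Filter.Eventually.of_forall ?_)
    intro s hs
    have hts : 0 < t - s := by linarith [hs.2]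
    have hs0 : 0 < s := hs.1
    show ENNReal.ofReal ((t - s) ^ (-c) * s ^ d) = f s ^ (2:ℝ)
    rw [hfdef]
    simp only
    rw [ENNReal.ofReal_rpow_of_pos (by positivity)]
    congr 1
    rw [Real.mul_rpow (Real.rpow_nonneg hts.le _) (Real.rpow_nonneg hs0.le _),
      ← Real.rpow_mul hts.le, ← Real.rpow_mul hs0.le]
    norm_num
  have e2 : ∫⁻ s in Ioo (0:ℝ) t, ENNReal.ofReal ((t - s) ^ (-c) * s ^ (-d) * B s ^ 2)
      = ∫⁻ a, g a ^ (2:ℝ) ∂μ := by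
    refine setLIntegral_congr_fun_ae measurableSet_Ioo (Filter.Eventually.of_forall ?_)
    intro s hs
    have hts : 0 < t - s := by linarith [hs.2]
    have hs0 : 0 < s := hs.1
    show ENNReal.ofReal ((t - s) ^ (-c) * s ^ (-d) * B s ^ 2) = g s ^ (2:ℝ)
    rw [hgdef]
    simp only
    rcases eq_or_lt_of_le (hB0 s) with hb0 | hb0
    · rw [← hb0]
      norm_num
    · rw [ENNReal.ofReal_rpow_of_pos (by positivity)]
      congr 1
      rw [Real.mul_rpow (by positivity) (hB0 s),
        Real.mul_rpow (Real.rpow_nonneg hts.le _) (Real.rpow_nonneg hs0.le _),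
        ← Real.rpow_mul hts.le, ← Real.rpow_mul hs0.le,
        ← Real.rpow_natCast (B s) 2]
      norm_num
  rw [e0, e1, e2]
  calc (∫⁻ a, (f * g) a ∂μ) ^ 2
      ≤ ((∫⁻ a, f a ^ (2:ℝ) ∂μ) ^ (1/(2:ℝ)) * (∫⁻ a, g a ^ (2:ℝ) ∂μ) ^ (1/(2:ℝ))) ^ 2 :=
        pow_le_pow_left' H 2
    _ = (∫⁻ a, f a ^ (2:ℝ) ∂μ) * ∫⁻ a, g a ^ (2:ℝ) ∂μ := by
        rw [mul_pow]
        congr 1 <;>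
          rw [← ENNReal.rpow_natCast _ 2, ← ENNReal.rpow_mul] <;>
          norm_num

/-- The convolution inequality, Lemma 4.25: let `0 ≤ c < 1` and `b < 2c+1`.  There is a
constant `γ` depending only on `b` and `c` such that for every `0 < T < ∞` and all
non-negative measurable `α, β` on `(0,T]` satisfying
`α(t) ≤ (1/t) ∫₀ᵗ (t-s)^{-c} β(s) ds`, one has
`∫₀ᵀ t^b α(t)² dt ≤ γ ∫₀ᵀ s^{b-2c} β(s)² ds` (integrals interpreted in `[0,∞]`). -/
theorem convolution_inequality (c b : ℝ) (hc0 : 0 ≤ c) (hc1 : c < 1) (hb : b < 2 * c + 1) :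
    ∃ γ : ℝ, 0 ≤ γ ∧ ∀ (T : ℝ), 0 < T → ∀ (α β : ℝ → ℝ),
      AEMeasurable α (volume.restrict (Set.Ioc 0 T)) →
      AEMeasurable β (volume.restrict (Set.Ioc 0 T)) →
      (∀ s ∈ Set.Ioc (0:ℝ) T, 0 ≤ α s) →
      (∀ s ∈ Set.Ioc (0:ℝ) T, 0 ≤ β s) →
      (∀ t ∈ Set.Ioc (0:ℝ) T, α t ≤ (1 / t) * ∫ s in Set.Ioo (0:ℝ) t, (t - s) ^ (-c) * β s) →
      ∫⁻ t in Set.Ioc (0:ℝ) T, ENNReal.ofReal (t ^ b * α t ^ 2) ≤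
        ENNReal.ofReal γ *
          ∫⁻ s in Set.Ioc (0:ℝ) T, ENNReal.ofReal (s ^ (b - 2 * c) * β s ^ 2) := by
  set d : ℝ := (2*c - b - 1)/2 with hd_def
  set e : ℝ := b - 1 - c + d with he_def
  have hd1 : -1 < d := by rw [hd_def]; linarith
  have he1 : e - c < -1 := by rw [he_def, hd_def]; linarith
  have hKd : (0:ℝ) ≤ max 1 ((2:ℝ)^(-d)) := le_trans zero_le_one (le_max_left _ _)
  have hKe : (0:ℝ) ≤ max 1 ((2:ℝ)^e) := le_trans zero_le_one (le_max_left _ _)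
  set A₀ : ℝ := (2:ℝ)^(c-d-1)/(d+1) + max 1 ((2:ℝ)^(-d)) * (2:ℝ)^(c-1)/(1-c) with hA_def
  set C₀ : ℝ := max 1 ((2:ℝ)^e)/(1-c) + (2:ℝ)^c * (2:ℝ)^(e-c+1)/(-(e-c+1)) with hC_def
  have hA0 : 0 ≤ A₀ := by
    refine add_nonneg (div_nonneg (Real.rpow_nonneg (by norm_num) _) (by linarith))
      (div_nonneg (mul_nonneg hKd (Real.rpow_nonneg (by norm_num) _)) (by linarith))
  have hC0 : 0 ≤ C₀ := by
    refine add_nonneg (div_nonneg hKe (by linarith))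
      (div_nonneg (mul_nonneg (Real.rpow_nonneg (by norm_num) _)
        (Real.rpow_nonneg (by norm_num) _)) (by linarith))
  refine ⟨A₀ * C₀, mul_nonneg hA0 hC0, ?_⟩
  intro T hT α β hα hβ hα0 hβ0 hyp
  classical
  set B : ℝ → ℝ := fun s => max (hβ.mk β s) 0 with hB_def
  have hBmeas : Measurable B := hβ.measurable_mk.max measurable_const
  have hB0 : ∀ s, 0 ≤ B s := fun s => le_max_right _ _
  have hβB : β =ᵐ[volume.restrict (Set.Ioc 0 T)] B := by
    filter_upwards [hβ.ae_eq_mk, ae_restrict_mem measurableSet_Ioc] with s h1 h2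
    rw [hB_def]
    simp only
    rw [← h1, max_eq_left (hβ0 s h2)]
  set H : ℝ → ℝ → ℝ≥0∞ := fun t s =>
    ENNReal.ofReal (t ^ e * ((t - s) ^ (-c) * s ^ (-d) * B s ^ 2)) with hH_def
  -- pointwise key bound
  have key : ∀ t ∈ Set.Ioc (0:ℝ) T, ENNReal.ofReal (t ^ b * α t ^ 2)
      ≤ ENNReal.ofReal A₀ * ∫⁻ s in Ioo (0:ℝ) t, H t s := by
    intro t htm
    have ht0 : 0 < t := htm.1
    have htT : t ≤ T := htm.2
    set I : ℝ := ∫ s in Ioo (0:ℝ) t, (t - s) ^ (-c) * B s with hI_def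
    have hIa : ∫ s in Ioo (0:ℝ) t, (t - s) ^ (-c) * β s = I := by
      refine integral_congr_ae ?_
      have hsub : Ioo (0:ℝ) t ⊆ Set.Ioc 0 T := fun x hx => ⟨hx.1, hx.2.le.trans htT⟩
      filter_upwards [ae_restrict_of_ae_restrict_of_subset hsub hβB] with s hs
      rw [hs]
    have hI0 : 0 ≤ I := by
      refine setIntegral_nonneg measurableSet_Ioo fun s hs =>
        mul_nonneg (Real.rpow_nonneg (by linarith [hs.2]) _) (hB0 s)
    have h1 : α t ≤ (1/t) * I := by rw [← hIa]; exact hyp t htm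
    have h2 : t^b * α t ^ 2 ≤ t^(b-2) * I^2 := by
      have hα2 : α t ^ 2 ≤ ((1/t)*I)^2 := pow_le_pow_left₀ (hα0 t htm) h1 2
      refine le_trans (mul_le_mul_of_nonneg_left hα2 (Real.rpow_nonneg ht0.le b))
        (le_of_eq ?_)
      rw [Real.rpow_sub ht0, show ((2:ℝ)) = ((2:ℕ):ℝ) by norm_num, Real.rpow_natCast]
      field_simp
    have h4 : ENNReal.ofReal I ≤ ∫⁻ s in Ioo (0:ℝ) t, ENNReal.ofReal ((t - s) ^ (-c) * B s) := by
      by_cases hInt : IntegrableOn (fun s => (t - s) ^ (-c) * B s) (Ioo 0 t) volume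
      · exact le_of_eq (ofReal_integral_eq_lintegral_ofReal hInt
          (ae_restrict_of_forall_mem measurableSet_Ioo fun s hs =>
            mul_nonneg (Real.rpow_nonneg (by linarith [hs.2]) _) (hB0 s)))
      · rw [hI_def, integral_undef hInt]
        simp
    calc ENNReal.ofReal (t ^ b * α t ^ 2)
        ≤ ENNReal.ofReal (t^(b-2)) * ENNReal.ofReal I ^ 2 := by
          refine le_trans (ENNReal.ofReal_le_ofReal h2) (le_of_eq ?_)
          rw [ENNReal.ofReal_mul (Real.rpow_nonneg ht0.le _), ENNReal.ofReal_pow hI0]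
      _ ≤ ENNReal.ofReal (t^(b-2)) *
            ((∫⁻ s in Ioo (0:ℝ) t, ENNReal.ofReal ((t - s) ^ (-c) * s ^ d)) *
             (∫⁻ s in Ioo (0:ℝ) t, ENNReal.ofReal ((t - s) ^ (-c) * s ^ (-d) * B s ^ 2))) :=
          mul_le_mul_right (le_trans (pow_le_pow_left' h4 2) (conv_CS hBmeas hB0 ht0)) _
      _ ≤ ENNReal.ofReal (t^(b-2)) *
            ((ENNReal.ofReal A₀ * ENNReal.ofReal (t ^ (1-c+d))) *
             (∫⁻ s in Ioo (0:ℝ) t, ENNReal.ofReal ((t - s) ^ (-c) * s ^ (-d) * B s ^ 2))) :=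
          mul_le_mul_right (mul_le_mul_left (conv_L1 hc0 hc1 hd1 ht0) _) _
      _ = ENNReal.ofReal A₀ * (ENNReal.ofReal (t ^ e) *
             ∫⁻ s in Ioo (0:ℝ) t, ENNReal.ofReal ((t - s) ^ (-c) * s ^ (-d) * B s ^ 2)) := by
          have hap : ENNReal.ofReal (t^(b-2)) * ENNReal.ofReal (t ^ (1-c+d))
              = ENNReal.ofReal (t ^ e) := by
            rw [← ENNReal.ofReal_mul (Real.rpow_nonneg ht0.le _), ← Real.rpow_add ht0]
            congr 1
            rw [he_def]; ring
          rw [← hap]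
          ring
      _ = ENNReal.ofReal A₀ * ∫⁻ s in Ioo (0:ℝ) t, H t s := by
          congr 1
          rw [← lintegral_const_mul' _ _ ENNReal.ofReal_ne_top]
          refine setLIntegral_congr_fun_ae measurableSet_Ioo (Filter.Eventually.of_forall ?_)
          intro s hs
          rw [hH_def]
          simp only
          rw [← ENNReal.ofReal_mul (Real.rpow_nonneg ht0.le _)]
  -- the double integral with indicator
  set F : ℝ × ℝ → ℝ≥0∞ := fun p => if p.2 < p.1 then H p.1 p.2 else 0 with hF_def
  have hFmeas : Measurable F := by
    refine Measurable.ite (measurableSet_lt measurable_snd measurable_fst) ?_ measurable_const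
    rw [hH_def]
    fun_prop
  have eq2 : ∫⁻ t in Ioc (0:ℝ) T, ∫⁻ s in Ioo (0:ℝ) t, H t s
      = ∫⁻ t in Ioc (0:ℝ) T, ∫⁻ s in Ioo (0:ℝ) T, F (t, s) := by
    refine setLIntegral_congr_fun_ae measurableSet_Ioc (Filter.Eventually.of_forall ?_)
    intro t htm
    have hind : ∀ s ∈ Ioo (0:ℝ) T, F (t, s) = (Iio t).indicator (H t) s := by
      intro s _
      rw [hF_def, Set.indicator_apply]
      simp only [Set.mem_Iio]
    rw [setLIntegral_congr_fun_ae measurableSet_Ioo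
      (Filter.Eventually.of_forall hind),
      lintegral_indicator measurableSet_Iio, Measure.restrict_restrict measurableSet_Iio]
    have hset : Iio t ∩ Ioo (0:ℝ) T = Ioo (0:ℝ) t := by
      ext x
      simp only [Set.mem_inter_iff, Set.mem_Iio, Set.mem_Ioo]
      exact ⟨fun h => ⟨h.2.1, h.1⟩, fun h => ⟨h.2, h.1, h.2.trans_le htm.2⟩⟩
    rw [hset]
  have swap : ∫⁻ t in Ioc (0:ℝ) T, ∫⁻ s in Ioo (0:ℝ) T, F (t, s)
      = ∫⁻ s in Ioo (0:ℝ) T, ∫⁻ t in Ioc (0:ℝ) T, F (t, s) :=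
    lintegral_lintegral_swap hFmeas.aemeasurable
  have inner_bound : ∀ s ∈ Ioo (0:ℝ) T, (∫⁻ t in Ioc (0:ℝ) T, F (t, s))
      ≤ ENNReal.ofReal C₀ * ENNReal.ofReal (s ^ (b - 2*c) * B s ^ 2) := by
    intro s hsm
    have hs0 : 0 < s := hsm.1
    have eq3 : ∫⁻ t in Ioc (0:ℝ) T, F (t, s) = ∫⁻ t in Ioc s T, H t s := by
      have hind : ∀ t ∈ Ioc (0:ℝ) T, F (t, s) = (Ioi s).indicator (fun t => H t s) t := by
        intro t _
        rw [hF_def, Set.indicator_apply]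
        simp only [Set.mem_Ioi]
      rw [setLIntegral_congr_fun_ae measurableSet_Ioc
        (Filter.Eventually.of_forall hind),
        lintegral_indicator measurableSet_Ioi, Measure.restrict_restrict measurableSet_Ioi]
      have hset : Ioi s ∩ Ioc (0:ℝ) T = Ioc s T := by
        ext x
        simp only [Set.mem_inter_iff, Set.mem_Ioi, Set.mem_Ioc]
        exact ⟨fun h => ⟨h.1, h.2.2⟩, fun h => ⟨h.1, hs0.trans h.1, h.2⟩⟩
      rw [hset]
    have eqsplit : ∫⁻ t in Ioc s T, H t s
        = (∫⁻ t in Ioc s T, ENNReal.ofReal (t ^ e * (t - s) ^ (-c)))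
          * ENNReal.ofReal (s ^ (-d) * B s ^ 2) := by
      rw [← lintegral_mul_const' _ _ ENNReal.ofReal_ne_top]
      refine setLIntegral_congr_fun_ae measurableSet_Ioc (Filter.Eventually.of_forall ?_)
      intro t htm
      have ht0 : 0 < t := hs0.trans htm.1
      have hts : 0 ≤ t - s := by linarith [htm.1]
      rw [hH_def]
      simp only
      rw [← ENNReal.ofReal_mul (mul_nonneg (Real.rpow_nonneg ht0.le _)
        (Real.rpow_nonneg hts _))]
      congr 1
      ring
    calc ∫⁻ t in Ioc (0:ℝ) T, F (t, s)
        = (∫⁻ t in Ioc s T, ENNReal.ofReal (t ^ e * (t - s) ^ (-c)))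
            * ENNReal.ofReal (s ^ (-d) * B s ^ 2) := by rw [eq3, eqsplit]
      _ ≤ (ENNReal.ofReal C₀ * ENNReal.ofReal (s ^ (e-c+1)))
            * ENNReal.ofReal (s ^ (-d) * B s ^ 2) :=
          mul_le_mul_left (conv_L2 hc0 hc1 he1 hs0) _
      _ = ENNReal.ofReal C₀ * ENNReal.ofReal (s ^ (b - 2*c) * B s ^ 2) := by
          rw [mul_assoc, ← ENNReal.ofReal_mul (Real.rpow_nonneg hs0.le _)]
          congr 2
          have hrw : s ^ (e-c+1) * s ^ (-d) = s ^ (b - 2*c) := by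
            rw [← Real.rpow_add hs0]
            congr 1
            rw [he_def, hd_def]; ring
          rw [← hrw]
          ring
  calc ∫⁻ t in Ioc (0:ℝ) T, ENNReal.ofReal (t ^ b * α t ^ 2)
      ≤ ∫⁻ t in Ioc (0:ℝ) T, ENNReal.ofReal A₀ * ∫⁻ s in Ioo (0:ℝ) t, H t s := by
        refine lintegral_mono_ae ?_
        filter_upwards [ae_restrict_mem measurableSet_Ioc] with t htm
        exact key t htm
    _ = ENNReal.ofReal A₀ * ∫⁻ t in Ioc (0:ℝ) T, ∫⁻ s in Ioo (0:ℝ) t, H t s :=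
        lintegral_const_mul' _ _ ENNReal.ofReal_ne_top
    _ = ENNReal.ofReal A₀ * ∫⁻ s in Ioo (0:ℝ) T, ∫⁻ t in Ioc (0:ℝ) T, F (t, s) := by
        rw [eq2, swap]
    _ ≤ ENNReal.ofReal A₀ * ∫⁻ s in Ioo (0:ℝ) T,
          ENNReal.ofReal C₀ * ENNReal.ofReal (s ^ (b - 2*c) * B s ^ 2) := by
        refine mul_le_mul_right ?_ _
        refine lintegral_mono_ae ?_
        filter_upwards [ae_restrict_mem measurableSet_Ioo] with s hsm
        exact inner_bound s hsm
    _ = ENNReal.ofReal (A₀ * C₀) * ∫⁻ s in Ioo (0:ℝ) T,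
          ENNReal.ofReal (s ^ (b - 2*c) * B s ^ 2) := by
        rw [lintegral_const_mul' _ _ ENNReal.ofReal_ne_top, ← mul_assoc,
          ← ENNReal.ofReal_mul hA0]
    _ = ENNReal.ofReal (A₀ * C₀) * ∫⁻ s in Ioc (0:ℝ) T,
          ENNReal.ofReal (s ^ (b - 2*c) * β s ^ 2) := by
        congr 1
        rw [setLIntegral_congr (Ioo_ae_eq_Ioc (a := (0:ℝ)) (b := T))]
        refine lintegral_congr_ae ?_
        filter_upwards [hβB] with s hs
        rw [hs]
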